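/- Continuity of entropy under energy constraint (Winter): let H̄ be a self-adjoint operator on a separable Hilbert space with tr(e^{−βH̄}) < ∞ for all β > 0. Then for every E > 0 there is a function ε ↦ εC(ε,H̄,E) + h(ε) tending to 0 as ε → 0 such that any two density operators ρ, σ with tr(ρH̄) ≤ E, tr(σH̄) ≤ E and ‖ρ − σ‖_1 ≤ ε satisfy |S(ρ) − S(σ)| ≤ εC(ε,H̄,E) + h(ε). -/

import Mathlib

noncomputable def nent (x : ℝ) : ℝ := -(x * Real.log x)

lemma nent_nonneg {x : ℝ} (h0 : 0 ≤ x) (h1 : x ≤ 1) : 0 ≤ nent x := by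
  have h := Real.log_nonpos h0 h1
  have : x * Real.log x ≤ 0 := mul_nonpos_of_nonneg_of_nonpos h0 h
  simp only [nent]; linarith

lemma nent_subadd {y d : ℝ} (hy : 0 ≤ y) (hd : 0 ≤ d) : nent (y + d) ≤ nent y + nent d := by
  have h1 : y * Real.log y ≤ y * Real.log (y + d) := by
    rcases eq_or_lt_of_le hy with h | h
    · simp [← h]
    · exact mul_le_mul_of_nonneg_left (Real.log_le_log h (by linarith)) hy
  have h2 : d * Real.log d ≤ d * Real.log (y + d) := by
    rcases eq_or_lt_of_le hd with h | h
    · simp [← h]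
    · exact mul_le_mul_of_nonneg_left (Real.log_le_log h (by linarith)) hd
  simp only [nent]; nlinarith [add_mul y d (Real.log (y + d))]

lemma nent_le_add {y d : ℝ} (hy : 0 ≤ y) (hd : 0 ≤ d) (h1 : y + d ≤ 1) :
    nent y ≤ nent (y + d) + d := by
  have hmono : MonotoneOn (fun x : ℝ => x - x * Real.log x) (Set.Icc 0 1) := by
    apply monotoneOn_of_deriv_nonneg (convex_Icc 0 1)
    · exact (continuous_id.sub Real.continuous_mul_log).continuousOn
    · intro x hx
      rw [interior_Icc] at hx
      exact ((hasDerivAt_id x).sub (Real.hasDerivAt_mul_log hx.1.ne')).differentiableAt.differentiableWithinAt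
    · intro x hx
      rw [interior_Icc] at hx
      have hdv : HasDerivAt (fun x : ℝ => x - x * Real.log x) (1 - (Real.log x + 1)) x :=
        (hasDerivAt_id x).sub (Real.hasDerivAt_mul_log hx.1.ne')
      rw [hdv.deriv]
      have : Real.log x ≤ 0 := Real.log_nonpos hx.1.le hx.2.le
      linarith
  have := hmono (Set.mem_Icc.2 ⟨hy, by linarith⟩) (Set.mem_Icc.2 ⟨by linarith, h1⟩)
    (by linarith : y ≤ y + d)
  simp only [nent]; simp only at this; linarith

lemma nent_diff_le {b a : ℝ} (hb0 : 0 ≤ b) (h : b ≤ a) (ha1 : a ≤ 1) :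
    |nent a - nent b| ≤ nent (a - b) + (a - b) := by
  have hd : 0 ≤ a - b := sub_nonneg.2 h
  have hs : nent a ≤ nent b + nent (a - b) := by
    have := nent_subadd hb0 hd
    rwa [show b + (a - b) = a from by ring] at this
  have hm : nent b ≤ nent a + (a - b) := by
    have := nent_le_add hb0 hd (by linarith)
    rwa [show b + (a - b) = a from by ring] at this
  have hn : 0 ≤ nent (a - b) := nent_nonneg hd (by linarith)
  rw [abs_le]; constructor <;> linarith

lemma abs_nent_sub_le {a b : ℝ} (ha0 : 0 ≤ a) (ha1 : a ≤ 1) (hb0 : 0 ≤ b) (hb1 : b ≤ 1) :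
    |nent a - nent b| ≤ nent |a - b| + |a - b| := by
  rcases le_total b a with h | h
  · rw [abs_of_nonneg (sub_nonneg.2 h)]; exact nent_diff_le hb0 h ha1
  · rw [abs_sub_comm a b, abs_of_nonneg (sub_nonneg.2 h), abs_sub_comm]
    exact nent_diff_le ha0 h hb1

lemma nent_le_head {d ε : ℝ} (hd : 0 ≤ d) (hε : 0 < ε) {N : ℕ} (hN : 0 < N) :
    nent d ≤ ε / N + d * Real.log N + d * Real.log ε⁻¹ := by
  rcases eq_or_lt_of_le hd with h0 | h0
  · have hN' : (0:ℝ) < N := by exact_mod_cast hN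
    simp only [nent, ← h0]
    have : 0 < ε / N := by positivity
    simp; linarith
  · have hN' : (0:ℝ) < N := by exact_mod_cast hN
    have hNd : (0:ℝ) < N * d := by positivity
    have key : Real.log (ε / (N * d)) ≤ ε / (N * d) - 1 :=
      Real.log_le_sub_one_of_pos (by positivity)
    have hlog : Real.log (ε / (N * d)) = Real.log ε - Real.log N - Real.log d := by
      rw [Real.log_div (ne_of_gt hε) (ne_of_gt hNd), Real.log_mul (ne_of_gt hN') (ne_of_gt h0)]
      ring
    have e0 : nent d = d * Real.log (ε / (N * d)) + d * Real.log N + d * Real.log ε⁻¹ := by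
      rw [hlog, Real.log_inv]; simp only [nent]; ring
    have e2 : d * Real.log (ε / (N * d)) ≤ d * (ε / (N * d) - 1) :=
      mul_le_mul_of_nonneg_left key hd
    have e3 : d * (ε / (N * d) - 1) = ε / N - d := by field_simp
    rw [e0]; linarith

lemma tail_bound {E' : ℕ → ℝ} (hE'0 : ∀ n, 0 ≤ E' n) {β δ E₀ : ℝ} (hβ : 0 < β)
    {F : Finset ℕ} (hg : Summable (fun n => Real.exp (-β * E' n)))
    (hF : ∑' (n : {x // x ∉ F}), Real.exp (-β * E' (n : ℕ)) ≤ δ)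
    {p : ℕ → ℝ} (hp0 : ∀ n, 0 ≤ p n)
    (hpE : Summable (fun n => p n * E' n)) (hpEle : (∑' n, p n * E' n) ≤ E₀)
    (hnent : Summable (fun n => nent (p n))) :
    ∑' (n : {x // x ∉ F}), nent (p (n : ℕ)) ≤ δ + β * E₀ := by
  have hpt : ∀ n, nent (p n) ≤ Real.exp (-β * E' n) + β * (p n * E' n) := by
    intro n
    rcases eq_or_lt_of_le (hp0 n) with h0 | h0
    · rw [← h0]
      simp only [nent, zero_mul, neg_zero, mul_zero, add_zero]
      positivity
    · set g := Real.exp (-β * E' n) with hgdef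
      have hg0 : 0 < g := Real.exp_pos _
      have hlog : Real.log (g / p n) ≤ g / p n - 1 :=
        Real.log_le_sub_one_of_pos (by positivity)
      have hlg : Real.log g = -β * E' n := Real.log_exp _
      have e1 : nent (p n) = p n * Real.log (g / p n) + β * (p n * E' n) := by
        rw [Real.log_div hg0.ne' h0.ne', hlg]; simp only [nent]; ring
      have e2 : p n * Real.log (g / p n) ≤ p n * (g / p n - 1) :=
        mul_le_mul_of_nonneg_left hlog (hp0 n)
      have e3 : p n * (g / p n - 1) = g - p n := by field_simp
      have := hp0 n
      linarith
  have h1 : Summable (fun n : {x // x ∉ F} => nent (p (n:ℕ))) := hnent.subtype _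
  have hgs : Summable (fun n : {x // x ∉ F} => Real.exp (-β * E' (n:ℕ))) := hg.subtype _
  have hpEs : Summable (fun n : {x // x ∉ F} => p (n:ℕ) * E' (n:ℕ)) := hpE.subtype _
  have h2 : Summable (fun n : {x // x ∉ F} =>
      Real.exp (-β * E' (n:ℕ)) + β * (p (n:ℕ) * E' (n:ℕ))) := hgs.add (hpEs.mul_left β)
  have step1 : ∑' (n : {x // x ∉ F}), nent (p (n:ℕ)) ≤
      ∑' (n : {x // x ∉ F}), (Real.exp (-β * E' (n:ℕ)) + β * (p (n:ℕ) * E' (n:ℕ))) :=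
    Summable.tsum_le_tsum (fun n => hpt n) h1 h2
  rw [Summable.tsum_add hgs (hpEs.mul_left β), tsum_mul_left] at step1
  have step2 : ∑' (n : {x // x ∉ F}), p (n:ℕ) * E' (n:ℕ) ≤ E₀ := by
    have hsplit := Summable.sum_add_tsum_subtype_compl hpE F
    have hhead : 0 ≤ ∑ n ∈ F, p n * E' n :=
      Finset.sum_nonneg (fun n _ => mul_nonneg (hp0 n) (hE'0 n))
    linarith
  have : β * ∑' (n : {x // x ∉ F}), p (n:ℕ) * E' (n:ℕ) ≤ β * E₀ :=
    mul_le_mul_of_nonneg_left step2 hβ.le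
  linarith

lemma core (En : ℕ → ℝ) (E m : ℝ) (hm : ∀ n, m ≤ En n) {β δ : ℝ} (hβ : 0 < β) (hδ : 0 < δ)
    (hg : Summable (fun n => Real.exp (-β * (En n - m)))) :
    ∃ N : ℕ, ∀ ε : ℝ, 0 < ε → ε < 1 → ∀ p q : ℕ → ℝ,
      (∀ n, 0 ≤ p n) → (∀ n, 0 ≤ q n) →
      (∑' n, p n) = 1 → (∑' n, q n) = 1 →
      Summable p → Summable q →
      Summable (fun n => p n * En n) → Summable (fun n => q n * En n) →
      (∑' n, p n * En n) ≤ E → (∑' n, q n * En n) ≤ E →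
      Summable (fun n => -(p n * Real.logb 2 (p n))) →
      Summable (fun n => -(q n * Real.logb 2 (q n))) →
      (∑' n, |p n - q n|) ≤ ε →
      |(∑' n, -(p n * Real.logb 2 (p n))) - (∑' n, -(q n * Real.logb 2 (q n)))|
        ≤ (2*ε + ε * Real.log N + ε * Real.log ε⁻¹ + 2*δ + 2*β*(max (E - m) 0))
            / Real.log 2 := by
  set E' : ℕ → ℝ := fun n => En n - m with hE'def
  have hE'0 : ∀ n, 0 ≤ E' n := fun n => sub_nonneg.2 (hm n)
  have hg' : Summable (fun n => Real.exp (-β * E' n)) := hg.congr (fun n => by simp [hE'def])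
  set E₀ : ℝ := max (E - m) 0 with hE₀def
  have hE₀0 : (0:ℝ) ≤ E₀ := le_max_right _ _
  have hlog2 : (0:ℝ) < Real.log 2 := Real.log_pos one_lt_two
  -- choose the finite set F
  obtain ⟨F, hF⟩ :=
    ((tendsto_tsum_compl_atTop_zero (fun n => Real.exp (-β * E' n))).eventually_lt_const
      hδ).exists
  refine ⟨F.card, ?_⟩
  intro ε hε hε1 p q hp0 hq0 hp1 hq1 hps hqs hpEn hqEn hpE hqE hSp hSq hd
  -- a bundle of facts for a single admissible distribution
  have key : ∀ r : ℕ → ℝ, (∀ n, 0 ≤ r n) → (∑' n, r n) = 1 → Summable r →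
      Summable (fun n => r n * En n) → (∑' n, r n * En n) ≤ E →
      Summable (fun n => -(r n * Real.logb 2 (r n))) →
      Summable (fun n => nent (r n)) ∧ (∀ n, r n ≤ 1) ∧
      (∑' n, -(r n * Real.logb 2 (r n))) = (∑' n, nent (r n)) / Real.log 2 ∧
      (0 ≤ ∑' (n : {x // x ∉ F}), nent (r (n:ℕ))) ∧
      (∑' (n : {x // x ∉ F}), nent (r (n:ℕ))) ≤ δ + β * E₀ := by
    intro r hr0 hr1 hrs hrEn hrE hSr
    have hnr : Summable (fun n => nent (r n)) := by
      refine (hSr.mul_right (Real.log 2)).congr (fun n => ?_)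
      simp only [Real.logb, nent]
      field_simp
    have hrle : ∀ n, r n ≤ 1 := by
      intro n
      have := Summable.le_tsum hrs n (fun j _ => hr0 j)
      rwa [hr1] at this
    have hconv : (∑' n, -(r n * Real.logb 2 (r n))) = (∑' n, nent (r n)) / Real.log 2 := by
      rw [← tsum_div_const]
      refine tsum_congr (fun n => ?_)
      simp only [Real.logb, nent]
      ring
    have hrE' : Summable (fun n => r n * E' n) := by
      refine ((hrEn.sub (hrs.mul_right m)).congr (fun n => ?_))
      simp only [hE'def]
      ring
    have hrE'le : (∑' n, r n * E' n) ≤ E₀ := by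
      have e : (∑' n, r n * E' n) = (∑' n, r n * En n) - m := by
        have h1 : ∀ n, r n * E' n = r n * En n - r n * m := fun n => by
          simp only [hE'def]; ring
        rw [tsum_congr h1, Summable.tsum_sub hrEn (hrs.mul_right m), tsum_mul_right, hr1, one_mul]
      have : (∑' n, r n * E' n) ≤ E - m := by rw [e]; linarith
      exact le_trans this (le_max_left _ _)
    refine ⟨hnr, hrle, hconv, tsum_nonneg (fun n => nent_nonneg (hr0 _) (hrle _)), ?_⟩
    exact tail_bound hE'0 hβ hg' hF.le hr0 hrE' hrE'le hnr
  obtain ⟨hnp, hple, convP, tailP0, tailP⟩ := key p hp0 hp1 hps hpEn hpE hSp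
  obtain ⟨hnq, hqle, convQ, tailQ0, tailQ⟩ := key q hq0 hq1 hqs hqEn hqE hSq
  -- head difference
  have hdsum : Summable (fun n => |p n - q n|) := (hps.sub hqs).abs
  have hdF : ∑ n ∈ F, |p n - q n| ≤ ε :=
    le_trans (Summable.sum_le_tsum F (fun i _ => abs_nonneg _) hdsum) hd
  have hlogε : 0 ≤ Real.log ε⁻¹ := Real.log_nonneg ((one_le_inv₀ hε).2 hε1.le)
  have headdiff : |(∑ n ∈ F, nent (p n)) - (∑ n ∈ F, nent (q n))| ≤
      2*ε + ε * Real.log F.card + ε * Real.log ε⁻¹ := by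
    rcases Finset.eq_empty_or_nonempty F with hFe | hFne
    · simp only [hFe, Finset.sum_empty, sub_zero, abs_zero, Finset.card_empty,
        Nat.cast_zero, Real.log_zero, mul_zero]
      nlinarith
    · have hN : 0 < F.card := Finset.card_pos.2 hFne
      have hN' : (1:ℝ) ≤ (F.card : ℝ) := by exact_mod_cast hN
      have hlogN : 0 ≤ Real.log (F.card : ℝ) := Real.log_nonneg hN'
      have step : |(∑ n ∈ F, nent (p n)) - (∑ n ∈ F, nent (q n))| ≤
          ∑ n ∈ F, (ε / (F.card : ℝ) + |p n - q n| * Real.log (F.card : ℝ)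
            + |p n - q n| * Real.log ε⁻¹ + |p n - q n|) := by
        rw [← Finset.sum_sub_distrib]
        refine le_trans (Finset.abs_sum_le_sum_abs _ _) (Finset.sum_le_sum (fun n _ => ?_))
        have h1 := abs_nent_sub_le (hp0 n) (hple n) (hq0 n) (hqle n)
        have h2 := nent_le_head (abs_nonneg (p n - q n)) hε hN
        linarith
      have expand : ∑ n ∈ F, (ε / (F.card : ℝ) + |p n - q n| * Real.log (F.card : ℝ)
            + |p n - q n| * Real.log ε⁻¹ + |p n - q n|)
          = (F.card : ℝ) * (ε / (F.card : ℝ))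
            + (∑ n ∈ F, |p n - q n|) * Real.log (F.card : ℝ)
            + (∑ n ∈ F, |p n - q n|) * Real.log ε⁻¹ + (∑ n ∈ F, |p n - q n|) := by
        rw [Finset.sum_add_distrib, Finset.sum_add_distrib, Finset.sum_add_distrib,
          ← Finset.sum_mul, ← Finset.sum_mul, Finset.sum_const, nsmul_eq_mul]
      have hc : (F.card : ℝ) * (ε / (F.card : ℝ)) = ε := by
        field_simp
      rw [expand, hc] at step
      have b1 : (∑ n ∈ F, |p n - q n|) * Real.log (F.card : ℝ) ≤ ε * Real.log (F.card : ℝ) :=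
        mul_le_mul_of_nonneg_right hdF hlogN
      have b2 : (∑ n ∈ F, |p n - q n|) * Real.log ε⁻¹ ≤ ε * Real.log ε⁻¹ :=
        mul_le_mul_of_nonneg_right hdF hlogε
      linarith
  -- combine
  rw [convP, convQ, div_sub_div_same, abs_div, abs_of_pos hlog2]
  rw [div_le_div_iff_of_pos_right hlog2]
  rw [← Summable.sum_add_tsum_subtype_compl hnp F, ← Summable.sum_add_tsum_subtype_compl hnq F]
  have habs : |((∑ n ∈ F, nent (p n)) + ∑' (n : {x // x ∉ F}), nent (p (n:ℕ)))
      - ((∑ n ∈ F, nent (q n)) + ∑' (n : {x // x ∉ F}), nent (q (n:ℕ)))|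
      ≤ |(∑ n ∈ F, nent (p n)) - (∑ n ∈ F, nent (q n))|
        + |(∑' (n : {x // x ∉ F}), nent (p (n:ℕ))) - ∑' (n : {x // x ∉ F}), nent (q (n:ℕ))| := by
    have := abs_add_le ((∑ n ∈ F, nent (p n)) - (∑ n ∈ F, nent (q n)))
      ((∑' (n : {x // x ∉ F}), nent (p (n:ℕ))) - ∑' (n : {x // x ∉ F}), nent (q (n:ℕ)))
    calc _ = |((∑ n ∈ F, nent (p n)) - (∑ n ∈ F, nent (q n)))
        + (((∑' (n : {x // x ∉ F}), nent (p (n:ℕ))) - ∑' (n : {x // x ∉ F}), nent (q (n:ℕ))))| := by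
          ring_nf
      _ ≤ _ := this
  have htabs : |(∑' (n : {x // x ∉ F}), nent (p (n:ℕ))) - ∑' (n : {x // x ∉ F}), nent (q (n:ℕ))|
      ≤ δ + β * E₀ := abs_le.2 ⟨by linarith, by linarith⟩
  have hβE : 0 ≤ β * E₀ := mul_nonneg hβ.le hE₀0
  linarith

/-- Binary entropy (base 2), `h(ε) = −ε·log₂ε − (1−ε)·log₂(1−ε)`. -/
noncomputable def binH (ε : ℝ) : ℝ :=
  -ε * Real.logb 2 ε - (1 - ε) * Real.logb 2 (1 - ε)

lemma binH_nonneg {ε : ℝ} (h0 : 0 ≤ ε) (h1 : ε ≤ 1) : 0 ≤ binH ε := by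
  have a := Real.logb_nonpos (by norm_num : (1:ℝ) < 2) h0 h1
  have b := Real.logb_nonpos (by norm_num : (1:ℝ) < 2) (by linarith : (0:ℝ) ≤ 1 - ε)
    (by linarith : (1:ℝ) - ε ≤ 1)
  simp only [binH]
  nlinarith

/-- Winter's continuity of entropy under an energy constraint, phrased for
states diagonal in the eigenbasis of the Hamiltonian `H̄` with eigenvalues `En`: if the
Gibbs hypothesis `tr(e^{−βH̄}) < ∞` holds for all `β > 0`, then for every `E > 0` there is
`C` with `ε·C(ε) + h(ε) → 0` as `ε → 0⁺` such that any two energy-bounded states at trace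
distance at most `ε` have entropies differing by at most `ε·C(ε) + h(ε)`. -/
theorem entropy_continuity_energy_constraint (En : ℕ → ℝ)
    (hGibbs : ∀ β : ℝ, 0 < β → Summable (fun n => Real.exp (-β * En n))) :
    ∀ E : ℝ, 0 < E → ∃ C : ℝ → ℝ,
      Filter.Tendsto (fun ε => ε * C ε + binH ε) (nhdsWithin 0 (Set.Ioi 0)) (nhds 0) ∧
      ∀ ε : ℝ, 0 < ε → ε < 1 → ∀ p q : ℕ → ℝ,
        (∀ n, 0 ≤ p n) → (∀ n, 0 ≤ q n) →
        (∑' n, p n) = 1 → (∑' n, q n) = 1 →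
        Summable p → Summable q →
        Summable (fun n => p n * En n) → Summable (fun n => q n * En n) →
        (∑' n, p n * En n) ≤ E → (∑' n, q n * En n) ≤ E →
        Summable (fun n => -(p n * Real.logb 2 (p n))) →
        Summable (fun n => -(q n * Real.logb 2 (q n))) →
        (∑' n, |p n - q n|) ≤ ε →
        |(∑' n, -(p n * Real.logb 2 (p n))) - (∑' n, -(q n * Real.logb 2 (q n)))|
          ≤ ε * C ε + binH ε := by
  -- a uniform lower bound on the energies
  have h1 : Summable (fun n => Real.exp (-1 * En n)) := hGibbs 1 one_pos
  have hev : ∀ᶠ n in Filter.cofinite, Real.exp (-1 * En n) < 1 :=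
    h1.tendsto_cofinite_zero.eventually_lt_const one_pos
  have hfin : {n | ¬ Real.exp (-1 * En n) < 1}.Finite := Filter.eventually_cofinite.mp hev
  obtain ⟨c, hc⟩ := (hfin.image En).bddBelow
  set m : ℝ := min c 0 with hmdef
  have hm : ∀ n, m ≤ En n := by
    intro n
    by_cases hn : Real.exp (-1 * En n) < 1
    · have hpos : 0 < En n := by
        have := Real.exp_lt_one_iff.1 hn; linarith
      exact le_trans (min_le_right _ _) hpos.le
    · exact le_trans (min_le_left _ _) (hc (Set.mem_image_of_mem En hn))
  intro E hE
  set E₀ : ℝ := max (E - m) 0 with hE₀def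
  have hE₀0 : (0:ℝ) ≤ E₀ := le_max_right _ _
  have hlog2 : (0:ℝ) < Real.log 2 := Real.log_pos one_lt_two
  have hgβ : ∀ β : ℝ, 0 < β → Summable (fun n => Real.exp (-β * (En n - m))) := by
    intro β hβ
    refine ((hGibbs β hβ).mul_left (Real.exp (β * m))).congr (fun n => ?_)
    rw [← Real.exp_add]; ring_nf
  set Bad : ℝ → Set ℝ := fun ε => {x | ∃ p q : ℕ → ℝ,
    (∀ n, 0 ≤ p n) ∧ (∀ n, 0 ≤ q n) ∧
    (∑' n, p n) = 1 ∧ (∑' n, q n) = 1 ∧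
    Summable p ∧ Summable q ∧
    Summable (fun n => p n * En n) ∧ Summable (fun n => q n * En n) ∧
    (∑' n, p n * En n) ≤ E ∧ (∑' n, q n * En n) ≤ E ∧
    Summable (fun n => -(p n * Real.logb 2 (p n))) ∧
    Summable (fun n => -(q n * Real.logb 2 (q n))) ∧
    (∑' n, |p n - q n|) ≤ ε ∧
    x = |(∑' n, -(p n * Real.logb 2 (p n))) - (∑' n, -(q n * Real.logb 2 (q n)))|}
    with hBad
  have hcore : ∀ β δ : ℝ, 0 < β → 0 < δ → ∃ N : ℕ, ∀ ε : ℝ, 0 < ε → ε < 1 →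
      ∀ x ∈ Bad ε, x ≤ (2*ε + ε * Real.log N + ε * Real.log ε⁻¹ + 2*δ + 2*β*E₀)
        / Real.log 2 := by
    intro β δ hβ hδ
    obtain ⟨N, hN⟩ := core En E m hm hβ hδ (hgβ β hβ)
    refine ⟨N, fun ε hε hε1 x hx => ?_⟩
    simp only [hBad, Set.mem_setOf_eq] at hx
    obtain ⟨p, q, hp0, hq0, hp1, hq1, hps, hqs, hpEn, hqEn, hpE, hqE, hSp, hSq, hd, hxeq⟩ := hx
    rw [hxeq, hE₀def]
    exact hN ε hε hε1 p q hp0 hq0 hp1 hq1 hps hqs hpEn hqEn hpE hqE hSp hSq hd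
  obtain ⟨N₁, hN₁⟩ := hcore 1 1 one_pos one_pos
  have bdd : ∀ ε : ℝ, 0 < ε → ε < 1 → BddAbove (insert (0:ℝ) (Bad ε)) := by
    intro ε hε hε1
    refine ⟨max 0 ((2*ε + ε * Real.log N₁ + ε * Real.log ε⁻¹ + 2*1 + 2*1*E₀)/Real.log 2), ?_⟩
    rintro x (rfl | hx)
    · exact le_max_left _ _
    · exact le_trans (hN₁ ε hε hε1 x hx) (le_max_right _ _)
  refine ⟨fun ε => sSup (insert (0:ℝ) (Bad ε)) / ε, ?_, ?_⟩
  · -- the tendsto part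
    have hDt : Filter.Tendsto (fun ε => sSup (insert (0:ℝ) (Bad ε)))
        (nhdsWithin 0 (Set.Ioi 0)) (nhds 0) := by
      rw [Metric.tendsto_nhds]
      intro η hη
      have hE₀1 : (0:ℝ) < E₀ + 1 := by linarith
      set β := η * Real.log 2 / (8*(E₀+1)) with hβdef
      have hβ : 0 < β := div_pos (mul_pos hη hlog2) (by positivity)
      set δ := η * Real.log 2 / 8 with hδdef
      have hδ : 0 < δ := div_pos (mul_pos hη hlog2) (by norm_num)
      obtain ⟨N, hN⟩ := hcore β δ hβ hδ
      set bfun : ℝ → ℝ := fun ε =>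
        (2*ε + ε * Real.log N + ε * Real.log ε⁻¹ + 2*δ + 2*β*E₀)/Real.log 2 with hbfun
      have hfe : bfun = fun ε : ℝ =>
          (2*ε + ε * Real.log N + (-(ε * Real.log ε)) + 2*δ + 2*β*E₀)/Real.log 2 := by
        funext ε; rw [hbfun]; simp only [Real.log_inv]; ring
      have hct : Continuous (fun ε : ℝ =>
          (2*ε + ε * Real.log N + (-(ε * Real.log ε)) + 2*δ + 2*β*E₀)/Real.log 2) := by
        apply Continuous.div_const
        exact ((((continuous_const.mul continuous_id).add
          (continuous_id.mul continuous_const)).add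
          Real.continuous_mul_log.neg).add continuous_const).add continuous_const
      have hcont : Filter.Tendsto bfun (nhdsWithin 0 (Set.Ioi 0))
          (nhds ((2*δ + 2*β*E₀)/Real.log 2)) := by
        rw [hfe]
        have h0 : (2*(0:ℝ) + (0:ℝ) * Real.log (N:ℝ) + -((0:ℝ) * Real.log 0) + 2*δ + 2*β*E₀)
            / Real.log 2 = (2*δ + 2*β*E₀)/Real.log 2 := by norm_num
        have := (hct.tendsto 0).mono_left (nhdsWithin_le_nhds (s := Set.Ioi (0:ℝ)))
        rwa [h0] at this
      have hlim : (2*δ + 2*β*E₀)/Real.log 2 < η := by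
        have h1 : 2*δ = η * Real.log 2 / 4 := by rw [hδdef]; ring
        have h2 : 2*β*E₀ ≤ η * Real.log 2 / 4 := by
          have hfrac : E₀ / (E₀ + 1) ≤ 1 := (div_le_one hE₀1).2 (by linarith)
          have hcalc : 2*β*E₀ = (η * Real.log 2 / 4) * (E₀/(E₀+1)) := by
            rw [hβdef]; field_simp; ring
          rw [hcalc]
          calc (η * Real.log 2 / 4) * (E₀/(E₀+1)) ≤ (η * Real.log 2 / 4) * 1 :=
                mul_le_mul_of_nonneg_left hfrac
                  (div_nonneg (mul_nonneg hη.le hlog2.le) (by norm_num))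
            _ = η * Real.log 2 / 4 := mul_one _
        have h3 : (2*δ + 2*β*E₀)/Real.log 2 ≤ (η/2 * Real.log 2)/Real.log 2 := by
          rw [div_le_div_iff_of_pos_right hlog2]; linarith
        have h4 : (η/2 * Real.log 2)/Real.log 2 = η/2 := by field_simp
        linarith
      have hev1 : ∀ᶠ ε in nhdsWithin 0 (Set.Ioi 0), bfun ε < η :=
        hcont.eventually_lt_const hlim
      have hev2 : ∀ᶠ ε in nhdsWithin 0 (Set.Ioi 0), ε ∈ Set.Ioo (0:ℝ) 1 :=
        Ioo_mem_nhdsGT_of_mem (Set.mem_Ico.2 ⟨le_refl 0, one_pos⟩)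
      filter_upwards [hev1, hev2] with ε hb hmem
      have hDle : sSup (insert (0:ℝ) (Bad ε)) ≤ bfun ε := by
        apply csSup_le (Set.insert_nonempty _ _)
        rintro x (rfl | hx)
        · rw [hbfun]
          apply div_nonneg _ hlog2.le
          have hlogN : 0 ≤ Real.log (N:ℝ) := by
            rcases Nat.eq_zero_or_pos N with h | h
            · simp [h]
            · exact Real.log_nonneg (by exact_mod_cast h)
          have hlogε : 0 ≤ Real.log ε⁻¹ := Real.log_nonneg ((one_le_inv₀ hmem.1).2 hmem.2.le)
          nlinarith [hmem.1, hδ.le, mul_nonneg hβ.le hE₀0,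
            mul_nonneg hmem.1.le hlogN, mul_nonneg hmem.1.le hlogε]
        · exact hN ε hmem.1 hmem.2 x hx
      have hD0 : 0 ≤ sSup (insert (0:ℝ) (Bad ε)) :=
        le_csSup (bdd ε hmem.1 hmem.2) (Set.mem_insert _ _)
      rw [Real.dist_eq, sub_zero, abs_of_nonneg hD0]
      linarith
    have hbinHt : Filter.Tendsto binH (nhdsWithin 0 (Set.Ioi 0)) (nhds 0) := by
      have hfe : binH = fun ε : ℝ =>
          (-(ε * Real.log ε) + -((1-ε) * Real.log (1-ε)))/Real.log 2 := by
        funext ε; simp only [binH, Real.logb]; ring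
      rw [hfe]
      have hct : Continuous (fun ε : ℝ =>
          (-(ε * Real.log ε) + -((1-ε) * Real.log (1-ε)))/Real.log 2) := by
        apply Continuous.div_const
        exact Real.continuous_mul_log.neg.add
          ((Real.continuous_mul_log.comp (continuous_const.sub continuous_id)).neg)
      have h0 : (-((0:ℝ) * Real.log 0) + -(((1:ℝ)-0) * Real.log (1-0)))/Real.log 2 = 0 := by
        norm_num
      have := (hct.tendsto 0).mono_left (nhdsWithin_le_nhds (s := Set.Ioi (0:ℝ)))
      rwa [h0] at this
    have hsum := hDt.add hbinHt
    rw [add_zero] at hsum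
    refine Filter.Tendsto.congr' ?_ hsum
    filter_upwards [self_mem_nhdsWithin] with ε hε
    have hεne : ε ≠ 0 := ne_of_gt hε
    field_simp
  · -- the bound part
    intro ε hε hε1 p q hp0 hq0 hp1 hq1 hps hqs hpEn hqEn hpE hqE hSp hSq hd
    have hmem : |(∑' n, -(p n * Real.logb 2 (p n))) - (∑' n, -(q n * Real.logb 2 (q n)))|
        ∈ Bad ε := by
      simp only [hBad, Set.mem_setOf_eq]
      exact ⟨p, q, hp0, hq0, hp1, hq1, hps, hqs, hpEn, hqEn, hpE, hqE, hSp, hSq, hd, rfl⟩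
    have hle := le_csSup (bdd ε hε hε1) (Set.mem_insert_of_mem _ hmem)
    have hbH : 0 ≤ binH ε := binH_nonneg hε.le hε1.le
    have hC : ε * (sSup (insert (0:ℝ) (Bad ε)) / ε) = sSup (insert (0:ℝ) (Bad ε)) := by
      field_simp
    rw [hC]
    linarith
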